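/- Assume the probability setting, that f is bounded on [c, c + k̄] for some k̄ > 0, and let (h_n) be a positive sequence with h_n → 0 and n·h_n → ∞. For p, s ∈ ℕ define Λ̂_{+,p,s}(h) := (1/(nh)) Σ_{i=1}^n 1(X_i ≥ c) K((X_i − c)/h) r_p((X_i − c)/h) r_s((X_i − c)/h)' and Λ̃_{+,p,s}(h) := ∫_0^∞ K(u) r_p(u) r_s(u)' f(uh + c) du. Then Λ̂_{+,p,s}(h_n) − Λ̃_{+,p,s}(h_n) = O_P(1/√(n h_n)). -/

import Mathlib

open MeasureTheory ProbabilityTheory Filter Matrix Set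
open scoped Topology BigOperators
open scoped NNReal ENNReal

noncomputable section

namespace RDHTE

/-- Polynomial basis `r_q(u) = (1, u, …, u^q)'`. -/
def rpoly (q : ℕ) (u : ℝ) : Fin (q + 1) → ℝ := fun i => u ^ (i : ℕ)

/-- Frobenius norm of a matrix. -/
def frob {ι κ : Type*} [Fintype ι] [Fintype κ] (M : Matrix ι κ ℝ) : ℝ :=
  Real.sqrt (∑ i, ∑ j, (M i j) ^ 2)

/-- Indicator `1(c ≤ x)`. -/
def indic (c x : ℝ) : ℝ := if c ≤ x then 1 else 0

/-- A kernel: bounded nonnegative Borel function vanishing outside `[-1,1]`. -/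
def IsKernel (K : ℝ → ℝ) : Prop :=
  Measurable K ∧ (∀ u, 0 ≤ K u) ∧ (∃ C, ∀ u, K u ≤ C) ∧
    ∀ u, u ∉ Icc (-1 : ℝ) 1 → K u = 0

/-- `X` has Lebesgue density `f` under `P`. -/
def HasDensity {Ω : Type*} [MeasurableSpace Ω] (P : Measure Ω) (X : Ω → ℝ) (f : ℝ → ℝ) : Prop :=
  Measurable X ∧ Measurable f ∧ (∀ x, 0 ≤ f x) ∧
    P.map X = MeasureTheory.volume.withDensity (fun x => ENNReal.ofReal (f x))

/-- An i.i.d. sequence of random elements. -/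
def IIDseq {Ω E : Type*} [MeasurableSpace Ω] [MeasurableSpace E]
    (P : Measure Ω) (Z : ℕ → Ω → E) : Prop :=
  (∀ i, Measurable (Z i)) ∧ iIndepFun Z P ∧
    ∀ i, IdentDistrib (Z i) (Z 0) P P

/-- `Z_n = O_P(a_n)`: for every `ε > 0` there are `M > 0` and `N` with
`P(|Z_n| ≥ M a_n) ≤ ε` for all `n ≥ N`. -/
def IsBigOP {Ω : Type*} [MeasurableSpace Ω] (P : Measure Ω)
    (Z : ℕ → Ω → ℝ) (a : ℕ → ℝ) : Prop :=
  ∀ ε > (0 : ℝ), ∃ M > (0 : ℝ), ∃ N : ℕ, ∀ n ≥ N,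
    (P {ω | M * a n ≤ |Z n ω|}).toReal ≤ ε

/-- Sample Gram matrix `Λ̂_{+,p,s}(h)` built from the first `n` observations. -/
def Lamhat {Ω : Type*} [MeasurableSpace Ω] (K : ℝ → ℝ) (c : ℝ) (X : ℕ → Ω → ℝ)
    (p s : ℕ) (n : ℕ) (h : ℝ) (ω : Ω) : Matrix (Fin (p + 1)) (Fin (s + 1)) ℝ :=
  Matrix.of fun i j => (1 / (n * h)) * ∑ k ∈ Finset.range n,
    indic c (X k ω) * K ((X k ω - c) / h) *
      (rpoly p ((X k ω - c) / h) i * rpoly s ((X k ω - c) / h) j)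

/-- Population counterpart `Λ̃_{+,p,s}(h)`. -/
def Lamtilde (K f : ℝ → ℝ) (c : ℝ) (p s : ℕ) (h : ℝ) :
    Matrix (Fin (p + 1)) (Fin (s + 1)) ℝ :=
  Matrix.of fun i j => ∫ u in Ioi (0 : ℝ), K u * (rpoly p u i * rpoly s u j) * f (u * h + c)

lemma integral_comp_density {Ω : Type*} [MeasurableSpace Ω] (P : Measure Ω)
    (X0 : Ω → ℝ) (f : ℝ → ℝ) (hX : Measurable X0) (hfm : Measurable f) (hfnn : ∀ x, 0 ≤ f x)
    (hmap : P.map X0 = volume.withDensity fun x => ENNReal.ofReal (f x))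
    (φ : ℝ → ℝ) (hφ : Measurable φ) :
    ∫ ω, φ (X0 ω) ∂P = ∫ x, f x * φ x := by
  rw [← integral_map hX.aemeasurable hφ.aestronglyMeasurable, hmap]
  have h1 : (volume.withDensity fun x => ENNReal.ofReal (f x))
      = volume.withDensity fun x => ((Real.toNNReal (f x) : ℝ≥0) : ℝ≥0∞) := rfl
  rw [h1, integral_withDensity_eq_integral_smul hfm.real_toNNReal φ]
  refine integral_congr_ae (Filter.Eventually.of_forall fun x => ?_)
  simp [NNReal.smul_def, Real.coe_toNNReal _ (hfnn x)]

lemma cov (K f : ℝ → ℝ) (c h : ℝ) (hh : 0 < h) (a b : ℕ) :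
    ∫ u in Ioi (0:ℝ), K u * (u ^ a * u ^ b) * f (u * h + c)
      = h⁻¹ * ∫ x, f x * (indic c x * K ((x - c)/h) * (((x - c)/h) ^ a * ((x - c)/h) ^ b)) := by
  set F : ℝ → ℝ := fun x => K ((x - c)/h) * (((x - c)/h) ^ a * ((x - c)/h) ^ b) * f x with hF
  have step1 : ∫ x, f x * (indic c x * K ((x - c)/h) * (((x - c)/h) ^ a * ((x - c)/h) ^ b))
      = ∫ x, (Ici c).indicator F x := by
    refine integral_congr_ae (Filter.Eventually.of_forall fun x => ?_)
    by_cases hc : c ≤ x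
    · simp only [indic, if_pos hc, Set.indicator_of_mem (mem_Ici.mpr hc), hF]; ring
    · simp [indic, if_neg hc, Set.indicator_of_notMem (fun hx => hc (mem_Ici.mp hx))]
  have step2 : ∫ x, (Ici c).indicator F x = ∫ x in Ioi c, F x := by
    rw [integral_indicator measurableSet_Ici, integral_Ici_eq_integral_Ioi]
  have emb : MeasurableEmbedding (fun x : ℝ => x + c) :=
    (MeasurableEquiv.addRight c).measurableEmbedding
  have hpre : (fun x : ℝ => x + c) ⁻¹' (Ioi c) = Ioi 0 := by
    ext x; simp
  have step3 : ∫ y in Ioi (0:ℝ), F (y + c) = ∫ x in Ioi c, F x := by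
    rw [← hpre]
    exact (measurePreserving_add_right volume c).setIntegral_preimage_emb emb F (Ioi c)
  have step4 : ∫ u in Ioi (0:ℝ), K u * (u ^ a * u ^ b) * f (u * h + c)
      = ∫ u in Ioi (0:ℝ), (fun y => F (y + c)) (h * u) := by
    refine integral_congr_ae (Filter.Eventually.of_forall fun u => ?_)
    simp only [hF, add_sub_cancel_right, mul_div_cancel_left₀ _ hh.ne']
    ring_nf
  rw [step4, integral_comp_mul_left_Ioi (fun y => F (y + c)) 0 hh, mul_zero, step3, ← step2,
    ← step1, smul_eq_mul]

lemma entry_bound {Ω : Type*} [MeasurableSpace Ω] (P : Measure Ω) [IsProbabilityMeasure P]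
    (X : ℕ → Ω → ℝ) (hXm : ∀ k, Measurable (X k))
    (hXind : ∀ k l, k ≠ l → IndepFun (X k) (X l) P)
    (hXid : ∀ k, IdentDistrib (X k) (X 0) P P)
    (c : ℝ) (f : ℝ → ℝ) (hfm : Measurable f) (hfnn : ∀ x, 0 ≤ f x)
    (hmap : P.map (X 0) = volume.withDensity fun x => ENNReal.ofReal (f x))
    (K : ℝ → ℝ) (hKm : Measurable K) (hKnn : ∀ u, 0 ≤ K u)
    (CK : ℝ) (hCK : ∀ u, K u ≤ CK)
    (hKsupp : ∀ u, u ∉ Icc (-1:ℝ) 1 → K u = 0)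
    (Cf kbar : ℝ) (hCfnn : 0 ≤ Cf) (hfb : ∀ x ∈ Icc c (c + kbar), f x ≤ Cf)
    (n : ℕ) (h : ℝ) (hh : 0 < h) (hhk : h ≤ kbar) (hn1 : 1 ≤ (n:ℝ) * h)
    (a b : ℕ) (M' : ℝ) (hM' : 0 < M') :
    P {ω | M' * (1 / Real.sqrt ((n:ℝ) * h)) ≤
        |(1/((n:ℝ) * h)) * (∑ k ∈ Finset.range n,
            indic c (X k ω) * K ((X k ω - c)/h) * (((X k ω - c)/h) ^ a * ((X k ω - c)/h) ^ b))
          - ∫ u in Ioi (0:ℝ), K u * (u ^ a * u ^ b) * f (u * h + c)|}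
      ≤ ENNReal.ofReal (CK ^ 2 * Cf / M' ^ 2) := by
  have hCK0 : 0 ≤ CK := le_trans (hKnn 0) (hCK 0)
  have hnh : (0:ℝ) < (n:ℝ) * h := lt_of_lt_of_le one_pos hn1
  have hn0 : (0:ℝ) < (n:ℝ) := by nlinarith
  set g : ℝ → ℝ := fun x => indic c x * K ((x - c)/h) * (((x - c)/h) ^ a * ((x - c)/h) ^ b)
    with hgdef
  -- measurability of g
  have hindic : Measurable (indic c) := by
    unfold indic
    exact Measurable.ite measurableSet_Ici measurable_const measurable_const
  have hum : Measurable (fun x : ℝ => (x - c)/h) := (measurable_id.sub_const c).div_const h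
  have hgm : Measurable g :=
    (hindic.mul (hKm.comp hum)).mul ((hum.pow_const a).mul (hum.pow_const b))
  -- bounds on g
  have hg0 : ∀ x, x ∉ Icc c (c + h) → g x = 0 := by
    intro x hx
    by_cases hc : c ≤ x
    · have hx2 : c + h < x := by
        rcases not_and_or.mp (fun hcc => hx ⟨hcc.1, hcc.2⟩) with h1 | h2
        · exact absurd hc h1
        · exact lt_of_not_ge h2
      have hu : (1:ℝ) < (x - c)/h := by
        rw [lt_div_iff₀ hh]; linarith
      have : K ((x - c)/h) = 0 := hKsupp _ (fun hmem => absurd hmem.2 (not_le.mpr hu))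
      simp [hgdef, this]
    · simp [hgdef, indic, if_neg hc]
  have hgnn : ∀ x, 0 ≤ g x := by
    intro x
    by_cases hc : c ≤ x
    · have hu : 0 ≤ (x - c)/h := div_nonneg (by linarith) hh.le
      have : indic c x = 1 := if_pos hc
      simp only [hgdef, this, one_mul]
      exact mul_nonneg (hKnn _) (mul_nonneg (pow_nonneg hu _) (pow_nonneg hu _))
    · simp [hgdef, indic, if_neg hc]
  have hgle : ∀ x, g x ≤ CK := by
    intro x
    by_cases hx : x ∈ Icc c (c + h)
    · have hu0 : 0 ≤ (x - c)/h := div_nonneg (by linarith [hx.1]) hh.le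
      have hu1 : (x - c)/h ≤ 1 := by
        rw [div_le_one hh]; linarith [hx.2]
      have hp : ((x - c)/h) ^ a * ((x - c)/h) ^ b ≤ 1 :=
        mul_le_one₀ (pow_le_one₀ hu0 hu1) (pow_nonneg hu0 _) (pow_le_one₀ hu0 hu1)
      have hi : indic c x = 1 := if_pos hx.1
      calc g x = K ((x - c)/h) * (((x - c)/h) ^ a * ((x - c)/h) ^ b) := by
            simp [hgdef, hi]
        _ ≤ CK * 1 := mul_le_mul (hCK _) hp
            (mul_nonneg (pow_nonneg hu0 _) (pow_nonneg hu0 _)) hCK0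
        _ = CK := mul_one CK
    · rw [hg0 x hx]; exact hCK0
  -- the random variables
  set G : ℕ → Ω → ℝ := fun k ω => g (X k ω) with hGdef
  have hGm : ∀ k, Measurable (G k) := fun k => hgm.comp (hXm k)
  have hGbd : ∀ k ω, ‖G k ω‖ ≤ CK := by
    intro k ω
    rw [Real.norm_eq_abs, abs_of_nonneg (hgnn _)]
    exact hgle _
  have hGmem : ∀ k, MemLp (G k) 2 P := fun k =>
    MemLp.of_bound (hGm k).aestronglyMeasurable CK (Filter.Eventually.of_forall (hGbd k))
  set T : Ω → ℝ := fun ω => (1/((n:ℝ) * h)) * ∑ k ∈ Finset.range n, G k ω with hTdef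
  have hSm : Measurable (fun ω => ∑ k ∈ Finset.range n, G k ω) :=
    Finset.measurable_sum _ (fun k _ => hGm k)
  have hTmem : MemLp T 2 P := by
    refine MemLp.of_bound (measurable_const.mul hSm).aestronglyMeasurable
      ((1/((n:ℝ) * h)) * ((n:ℝ) * CK)) (Filter.Eventually.of_forall fun ω => ?_)
    have h1 : |∑ k ∈ Finset.range n, G k ω| ≤ (n:ℝ) * CK := by
      calc |∑ k ∈ Finset.range n, G k ω| ≤ ∑ k ∈ Finset.range n, |G k ω| :=
            Finset.abs_sum_le_sum_abs _ _
        _ ≤ ∑ k ∈ Finset.range n, CK := Finset.sum_le_sum fun k _ => by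
            simpa [Real.norm_eq_abs] using hGbd k ω
        _ = (n:ℝ) * CK := by simp [mul_comm]
    rw [Real.norm_eq_abs, hTdef, abs_mul, abs_of_nonneg (by positivity : (0:ℝ) ≤ 1/((n:ℝ)*h))]
    exact mul_le_mul_of_nonneg_left h1 (by positivity)
  -- expectation of g(X 0)
  set Eg : ℝ := ∫ ω, g (X 0 ω) ∂P with hEgdef
  have hEg : Eg = ∫ x, f x * g x :=
    integral_comp_density P (X 0) f (hXm 0) hfm hfnn hmap g hgm
  have hLam : (∫ u in Ioi (0:ℝ), K u * (u ^ a * u ^ b) * f (u * h + c)) = h⁻¹ * Eg := by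
    rw [cov K f c h hh a b, hEg]
  -- mean of T
  have hGint : ∀ k, Integrable (G k) P := fun k => (hGmem k).integrable one_le_two
  have hGeq : ∀ k, ∫ ω, G k ω ∂P = Eg := by
    intro k
    exact ((hXid k).comp hgm).integral_eq
  have hTmean : ∫ ω, T ω ∂P = h⁻¹ * Eg := by
    rw [hTdef]
    rw [integral_const_mul, integral_finset_sum _ (fun k _ => hGint k)]
    simp only [hGeq, Finset.sum_const, Finset.card_range, nsmul_eq_mul]
    field_simp
  -- variance bound
  have hVar0 : variance (G 0) P ≤ CK ^ 2 * Cf * h := by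
    refine le_trans (variance_le_expectation_sq (hGm 0).aestronglyMeasurable) ?_
    have h2 : P[(G 0) ^ 2] = ∫ x, f x * (g x) ^ 2 := by
      have := integral_comp_density P (X 0) f (hXm 0) hfm hfnn hmap (fun x => (g x) ^ 2)
        (hgm.pow_const 2)
      simpa using this
    rw [h2]
    have hle : ∀ x, f x * (g x) ^ 2 ≤ (Icc c (c + h)).indicator (fun _ => Cf * CK ^ 2) x := by
      intro x
      by_cases hx : x ∈ Icc c (c + h)
      · rw [Set.indicator_of_mem hx]
        have hfx : f x ≤ Cf := hfb x ⟨hx.1, le_trans hx.2 (by linarith)⟩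
        have hg2 : (g x) ^ 2 ≤ CK ^ 2 :=
          pow_le_pow_left₀ (hgnn x) (hgle x) 2
        exact mul_le_mul hfx hg2 (sq_nonneg _) hCfnn
      · rw [Set.indicator_of_notMem hx, hg0 x hx]
        simp
    calc ∫ x, f x * (g x) ^ 2
        ≤ ∫ x, (Icc c (c + h)).indicator (fun _ => Cf * CK ^ 2) x :=
          integral_mono_of_nonneg
            (Filter.Eventually.of_forall fun x => mul_nonneg (hfnn x) (sq_nonneg _))
            ((integrableOn_const measure_Icc_lt_top.ne).integrable_indicator
              measurableSet_Icc)
            (Filter.Eventually.of_forall hle)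
      _ = CK ^ 2 * Cf * h := by
          rw [integral_indicator_const _ measurableSet_Icc]
          simp [Real.volume_Icc, ENNReal.toReal_ofReal hh.le]
          rw [max_eq_left hh.le]
          ring
  have hVsum : variance (fun ω => ∑ k ∈ Finset.range n, G k ω) P
      ≤ (n:ℝ) * (CK ^ 2 * Cf * h) := by
    have hfun : (fun ω => ∑ k ∈ Finset.range n, G k ω) = ∑ k ∈ Finset.range n, G k := by
      funext ω; simp
    rw [hfun, IndepFun.variance_sum (fun k _ => hGmem k)
      (fun k _ l _ hkl => (hXind k l hkl).comp hgm hgm)]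
    calc ∑ k ∈ Finset.range n, variance (G k) P
        = ∑ k ∈ Finset.range n, variance (G 0) P := by
          refine Finset.sum_congr rfl fun k _ => ?_
          exact ((hXid k).comp hgm).variance_eq
      _ = (n:ℝ) * variance (G 0) P := by simp [mul_comm]
      _ ≤ (n:ℝ) * (CK ^ 2 * Cf * h) := by
          exact mul_le_mul_of_nonneg_left hVar0 (by positivity)
  have hVarT : variance T P ≤ CK ^ 2 * Cf / ((n:ℝ) * h) := by
    have hsmul : T = (1/((n:ℝ) * h)) • (fun ω => ∑ k ∈ Finset.range n, G k ω) := by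
      funext ω; simp [hTdef, smul_eq_mul]
    rw [hsmul, variance_smul]
    calc (1/((n:ℝ) * h)) ^ 2 * variance (fun ω => ∑ k ∈ Finset.range n, G k ω) P
        ≤ (1/((n:ℝ) * h)) ^ 2 * ((n:ℝ) * (CK ^ 2 * Cf * h)) :=
          mul_le_mul_of_nonneg_left hVsum (by positivity)
      _ = CK ^ 2 * Cf / ((n:ℝ) * h) := by
          field_simp
  -- Chebyshev
  have hsq : (0:ℝ) < Real.sqrt ((n:ℝ) * h) := Real.sqrt_pos.mpr hnh
  have hcpos : (0:ℝ) < M' * (1 / Real.sqrt ((n:ℝ) * h)) := by positivity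
  have hceb := meas_ge_le_variance_div_sq (μ := P) hTmem hcpos
  have hsetEq : {ω | M' * (1 / Real.sqrt ((n:ℝ) * h)) ≤
        |(1/((n:ℝ) * h)) * (∑ k ∈ Finset.range n,
            indic c (X k ω) * K ((X k ω - c)/h) * (((X k ω - c)/h) ^ a * ((X k ω - c)/h) ^ b))
          - ∫ u in Ioi (0:ℝ), K u * (u ^ a * u ^ b) * f (u * h + c)|}
      = {ω | M' * (1 / Real.sqrt ((n:ℝ) * h)) ≤ |T ω - P[T]|} := by
    rw [hTmean, hLam]
  rw [hsetEq]
  refine le_trans hceb (ENNReal.ofReal_le_ofReal ?_)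
  have hc2 : (M' * (1 / Real.sqrt ((n:ℝ) * h))) ^ 2 = M' ^ 2 * (1/((n:ℝ) * h)) := by
    rw [mul_pow, div_pow, one_pow, Real.sq_sqrt hnh.le]
  rw [hc2]
  calc variance T P / (M' ^ 2 * (1/((n:ℝ) * h)))
      ≤ (CK ^ 2 * Cf / ((n:ℝ) * h)) / (M' ^ 2 * (1/((n:ℝ) * h))) := by
        gcongr
      _ = CK ^ 2 * Cf / M' ^ 2 := by
        field_simp

/-- Under the probability setting, if `f` is bounded on `[c, c + k̄]`
for some `k̄ > 0`, `h_n → 0` and `n h_n → ∞`, then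
`Λ̂_{+,p,s}(h_n) − Λ̃_{+,p,s}(h_n) = O_P(1/√(n h_n))`. -/
theorem stmt3
    {Ω : Type*} [MeasurableSpace Ω] (P : Measure Ω) [IsProbabilityMeasure P]
    (d : ℕ) (hd : 1 ≤ d)
    (Y X : ℕ → Ω → ℝ) (W : ℕ → Ω → Fin d → ℝ)
    (hiid : IIDseq P (fun i ω => (Y i ω, X i ω, W i ω)))
    (c : ℝ) (f : ℝ → ℝ) (hf : HasDensity P (X 0) f)
    (kbar : ℝ) (hkbar : 0 < kbar) (hfb : ∃ C, ∀ x ∈ Icc c (c + kbar), f x ≤ C)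
    (K : ℝ → ℝ) (hK : IsKernel K)
    (p s : ℕ)
    (h : ℕ → ℝ) (hpos : ∀ n, 0 < h n)
    (h0 : Tendsto h atTop (𝓝 0))
    (hnh : Tendsto (fun n : ℕ => (n : ℝ) * h n) atTop atTop) :
    IsBigOP P
      (fun n ω => frob (Lamhat K c X p s n (h n) ω - Lamtilde K f c p s (h n)))
      (fun n => 1 / Real.sqrt ((n : ℝ) * h n)) := by
  obtain ⟨hKm, hKnn, ⟨CK, hCK⟩, hKsupp⟩ := hK
  obtain ⟨hX0m, hfm, hfnn, hmap⟩ := hf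
  obtain ⟨Cf0, hCf0⟩ := hfb
  set Cf : ℝ := max Cf0 0 with hCfdef
  have hCfnn : 0 ≤ Cf := le_max_right _ _
  have hfbd : ∀ x ∈ Icc c (c + kbar), f x ≤ Cf := fun x hx => le_trans (hCf0 x hx) (le_max_left _ _)
  -- measurability / independence / identical distribution of the X's
  have hZm := hiid.1
  have hproj : Measurable (fun z : ℝ × ℝ × (Fin d → ℝ) => z.2.1) :=
    measurable_fst.comp measurable_snd
  have hXm : ∀ k, Measurable (X k) := fun k => hproj.comp (hZm k)
  have hXind : ∀ k l, k ≠ l → IndepFun (X k) (X l) P := fun k l hkl =>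
    (hiid.2.1.indepFun hkl).comp hproj hproj
  have hXid : ∀ k, IdentDistrib (X k) (X 0) P P := fun k => (hiid.2.2 k).comp hproj
  -- constants
  intro ε hε
  set cnt : ℝ := (((p + 1) * (s + 1) : ℕ) : ℝ) with hcntdef
  have hcnt1 : (1:ℝ) ≤ cnt := by
    rw [hcntdef]
    exact_mod_cast Nat.one_le_iff_ne_zero.mpr (by positivity)
  have hcnt0 : (0:ℝ) < cnt := lt_of_lt_of_le one_pos hcnt1
  set B : ℝ := CK ^ 2 * Cf with hBdef
  have hB0 : 0 ≤ B := mul_nonneg (sq_nonneg _) hCfnn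
  set M' : ℝ := Real.sqrt (cnt * B / ε) + 1 with hM'def
  have hM' : 0 < M' := by positivity
  set M : ℝ := M' * Real.sqrt cnt with hMdef
  have hM : 0 < M := by positivity
  -- final per-entry bound is at most ε / cnt
  have hkey : cnt * (B / M' ^ 2) ≤ ε := by
    have hr : Real.sqrt (cnt * B / ε) ^ 2 = cnt * B / ε :=
      Real.sq_sqrt (by positivity)
    have hM'sq : cnt * B / ε ≤ M' ^ 2 := by
      rw [← hr]
      have h1 : Real.sqrt (cnt * B / ε) ≤ M' := by rw [hM'def]; linarith
      exact pow_le_pow_left₀ (Real.sqrt_nonneg _) h1 2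
    rw [mul_div_assoc'] -- cnt * B / M'^2
    rw [div_le_iff₀ (by positivity)]
    calc cnt * B = (cnt * B / ε) * ε := by field_simp
      _ ≤ M' ^ 2 * ε := mul_le_mul_of_nonneg_right hM'sq hε.le
      _ = ε * M' ^ 2 := by ring
  -- choose N
  have hev1 : ∀ᶠ n in (atTop : Filter ℕ), h n < kbar := h0.eventually_lt_const hkbar
  have hev2 : ∀ᶠ n in (atTop : Filter ℕ), (1:ℝ) ≤ ((n:ℕ):ℝ) * h n := by
    have := hnh.eventually_ge_atTop (1:ℝ)
    exact this
  obtain ⟨N, hN⟩ := Filter.eventually_atTop.mp (hev1.and hev2)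
  refine ⟨M, hM, N, fun n hn => ?_⟩
  obtain ⟨hn1, hn2⟩ := hN n hn
  have hh := hpos n
  have hnh' : (0:ℝ) < (n:ℝ) * h n := lt_of_lt_of_le one_pos hn2
  set an : ℝ := 1 / Real.sqrt ((n:ℝ) * h n) with handef
  have han : 0 < an := by
    rw [handef]; positivity
  set D : Ω → Matrix (Fin (p+1)) (Fin (s+1)) ℝ :=
    fun ω => Lamhat K c X p s n (h n) ω - Lamtilde K f c p s (h n) with hDdef
  -- the union bound inclusion
  have hsub : {ω | M * an ≤ frob (D ω)} ⊆
      ⋃ (i : Fin (p+1)) (j : Fin (s+1)), {ω | M' * an ≤ |D ω i j|} := by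
    intro ω hω
    by_contra hc
    simp only [Set.mem_iUnion, Set.mem_setOf_eq, not_exists, not_le] at hc
    have hlt : frob (D ω) < M * an := by
      have hsum : ∑ i, ∑ j, (D ω i j) ^ 2 < ∑ (_ : Fin (p+1)), ∑ (_ : Fin (s+1)), (M' * an) ^ 2 := by
        refine Finset.sum_lt_sum_of_nonempty Finset.univ_nonempty fun i _ => ?_
        refine Finset.sum_lt_sum_of_nonempty Finset.univ_nonempty fun j _ => ?_
        calc (D ω i j) ^ 2 = |D ω i j| ^ 2 := (sq_abs _).symm
          _ < (M' * an) ^ 2 := by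
            exact pow_lt_pow_left₀ (hc i j) (abs_nonneg _) two_ne_zero
      have hconst : ∑ (_ : Fin (p+1)), ∑ (_ : Fin (s+1)), (M' * an) ^ 2 = cnt * (M' * an) ^ 2 := by
        simp [Finset.sum_const, Finset.card_univ, hcntdef]
        push_cast
        ring
      have h2 : frob (D ω) < Real.sqrt (cnt * (M' * an) ^ 2) := by
        rw [frob]
        refine Real.sqrt_lt_sqrt ?_ (by rw [← hconst]; exact hsum)
        exact Finset.sum_nonneg fun i _ => Finset.sum_nonneg fun j _ => sq_nonneg _
      calc frob (D ω) < Real.sqrt (cnt * (M' * an) ^ 2) := h2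
        _ = M * an := by
          rw [Real.sqrt_mul hcnt0.le, Real.sqrt_sq (by positivity)]
          rw [hMdef]; ring
    exact absurd hω (by simp only [Set.mem_setOf_eq, not_le]; exact hlt)
  -- entry event bound, rewritten in matrix-entry form
  have hentry : ∀ (i : Fin (p+1)) (j : Fin (s+1)),
      P {ω | M' * an ≤ |D ω i j|} ≤ ENNReal.ofReal (B / M' ^ 2) := by
    intro i j
    exact entry_bound P X hXm hXind hXid c f hfm hfnn hmap K hKm hKnn CK hCK hKsupp
      Cf kbar hCfnn hfbd n (h n) hh (le_of_lt hn1) hn2 (i : ℕ) (j : ℕ) M' hM'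
  -- put it together
  have hunion : P {ω | M * an ≤ frob (D ω)} ≤ ENNReal.ofReal ε := by
    calc P {ω | M * an ≤ frob (D ω)}
        ≤ P (⋃ (i : Fin (p+1)) (j : Fin (s+1)), {ω | M' * an ≤ |D ω i j|}) :=
          measure_mono hsub
      _ ≤ ∑ i : Fin (p+1), P (⋃ (j : Fin (s+1)), {ω | M' * an ≤ |D ω i j|}) :=
          measure_iUnion_fintype_le _ _
      _ ≤ ∑ i : Fin (p+1), ∑ j : Fin (s+1), P {ω | M' * an ≤ |D ω i j|} :=
          Finset.sum_le_sum fun i _ => measure_iUnion_fintype_le _ _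
      _ ≤ ∑ (_ : Fin (p+1)), ∑ (_ : Fin (s+1)), ENNReal.ofReal (B / M' ^ 2) :=
          Finset.sum_le_sum fun i _ => Finset.sum_le_sum fun j _ => hentry i j
      _ = (((p+1) * (s+1) : ℕ) : ℝ≥0∞) * ENNReal.ofReal (B / M' ^ 2) := by
          simp [Finset.sum_const, Finset.card_univ, mul_assoc]
      _ = ENNReal.ofReal (cnt * (B / M' ^ 2)) := by
          rw [ENNReal.ofReal_mul (by positivity : (0:ℝ) ≤ cnt), hcntdef,
            ENNReal.ofReal_natCast]
      _ ≤ ENNReal.ofReal ε := ENNReal.ofReal_le_ofReal hkey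
  have hgoal : {ω | M * an ≤ |frob (D ω)|} = {ω | M * an ≤ frob (D ω)} := by
    ext ω
    have hnn : (0:ℝ) ≤ frob (D ω) := Real.sqrt_nonneg _
    simp only [Set.mem_setOf_eq, abs_of_nonneg hnn]
  refine ENNReal.toReal_le_of_le_ofReal hε.le ?_
  show P {ω | M * an ≤ |frob (D ω)|} ≤ ENNReal.ofReal ε
  rw [hgoal]; exact hunion

end RDHTE
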